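/- Suppose α, β, γ, δ, σ > 0 and γδ > ασ, and set a := γδ/σ − α. Let (x, y) : [0,∞) → ℝ² be a differentiable solution of ẋ = δ − αx − βxy, ẏ = γxy − σy with x(0) > 0 and y(0) > 0. Then (x(t), y(t)) → (σ/γ, a/β) as t → ∞. In other words, the open first quadrant is a domain of attraction of the equilibrium (σ/γ, a/β). -/

import Mathlib

open Filter

lemma aux_log_lb {k u : ℝ} (hk : 0 < k) (hu : 0 < u) :
    k - k * Real.log k ≤ u - k * Real.log u := by
  have h := Real.log_le_sub_one_of_pos (show (0:ℝ) < u/k from div_pos hu hk)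
  rw [Real.log_div (ne_of_gt hu) (ne_of_gt hk)] at h
  have h2 := mul_le_mul_of_nonneg_left h hk.le
  rw [mul_sub, mul_sub, mul_div_cancel₀ _ (ne_of_gt hk), mul_one] at h2
  linarith

lemma aux_phi_bounds {k C u : ℝ} (hk : 0 < k) (hu : 0 < u)
    (h : u - k * Real.log u ≤ C) :
    Real.exp (-(C/k)) ≤ u ∧ u ≤ (k + Real.sqrt (C + k^2))^2 := by
  constructor
  · have h1 : -(C/k) ≤ Real.log u := by
      rw [neg_div'] at *
      exact (div_le_iff₀ hk).2 (by nlinarith)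
    calc Real.exp (-(C/k)) ≤ Real.exp (Real.log u) := Real.exp_le_exp.2 h1
      _ = u := Real.exp_log hu
  · have hs : Real.sqrt u ^ 2 = u := Real.sq_sqrt hu.le
    have hsp : 0 ≤ Real.sqrt u := Real.sqrt_nonneg u
    have hlog : Real.log u ≤ 2 * Real.sqrt u := by
      have h1 : Real.log (Real.sqrt u) ≤ Real.sqrt u - 1 :=
        Real.log_le_sub_one_of_pos (Real.sqrt_pos.2 hu)
      have h2 : Real.log (Real.sqrt u) = Real.log u / 2 := Real.log_sqrt hu.le
      linarith
    have key : (Real.sqrt u - k)^2 ≤ C + k^2 := by nlinarith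
    have h3 : |Real.sqrt u - k| ≤ Real.sqrt (C + k^2) := by
      rw [← Real.sqrt_sq_eq_abs]
      exact Real.sqrt_le_sqrt key
    have h4 : Real.sqrt u ≤ k + Real.sqrt (C + k^2) := by
      have := abs_le.1 h3
      linarith [this.2]
    calc u = Real.sqrt u ^ 2 := hs.symm
      _ ≤ (k + Real.sqrt (C + k^2))^2 := by nlinarith [Real.sqrt_nonneg (C + k^2)]

lemma pos_of_linear_ode {y p : ℝ → ℝ}
    (hy : ∀ t, 0 ≤ t → HasDerivAt y (p t * y t) t)
    (hp : ContinuousOn p (Set.Ici 0)) (hy0 : 0 < y 0) :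
    ∀ t, 0 ≤ t → 0 < y t := by
  have hcont : ContinuousOn y (Set.Ici 0) :=
    fun t ht => (hy t ht).continuousAt.continuousWithinAt
  have hnozero : ∀ t, 0 ≤ t → y t ≠ 0 := by
    by_contra hcon
    push_neg at hcon
    obtain ⟨t₁, ht₁, hyt₁⟩ := hcon
    set S : Set ℝ := Set.Ici 0 ∩ y ⁻¹' {0} with hS
    have hSne : S.Nonempty := ⟨t₁, ht₁, hyt₁⟩
    have hSbdd : BddBelow S := ⟨0, fun s hs => hs.1⟩
    have hSclosed : IsClosed S :=
      hcont.preimage_isClosed_of_isClosed isClosed_Ici isClosed_singleton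
    set t₀ := sInf S with ht₀
    have ht₀S : t₀ ∈ S := hSclosed.csInf_mem hSne hSbdd
    have ht₀0 : 0 ≤ t₀ := ht₀S.1
    have hyt₀ : y t₀ = 0 := ht₀S.2
    have ht₀pos : 0 < t₀ := by
      rcases ht₀0.lt_or_eq with h | h
      · exact h
      · exfalso; rw [← h] at hyt₀; rw [hyt₀] at hy0; exact lt_irrefl 0 hy0
    have hnn : ∀ s ∈ Set.Icc (0:ℝ) t₀, 0 ≤ y s := by
      intro s hs
      by_contra hneg
      push_neg at hneg
      have hiv : Set.Icc (y s) (y 0) ⊆ y '' Set.Icc 0 s :=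
        intermediate_value_Icc' hs.1 (hcont.mono (fun r hr => hr.1))
      have h0mem : (0:ℝ) ∈ Set.Icc (y s) (y 0) := ⟨hneg.le, hy0.le⟩
      obtain ⟨r, hr, hyr⟩ := hiv h0mem
      have hrS : r ∈ S := ⟨hr.1, hyr⟩
      have h1 : t₀ ≤ r := csInf_le hSbdd hrS
      have h2 : t₀ ≤ s := le_trans h1 hr.2
      have hseq : s = t₀ := le_antisymm hs.2 h2
      rw [hseq, hyt₀] at hneg; exact lt_irrefl 0 hneg
    obtain ⟨C, hC⟩ := (isCompact_Icc (a := (0:ℝ)) (b := t₀)).exists_bound_of_continuousOn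
      (hp.mono (fun r hr => hr.1))
    have hC0 : 0 ≤ C := le_trans (norm_nonneg _) (hC 0 ⟨le_refl 0, ht₀0⟩)
    set u : ℝ → ℝ := fun s => y s * Real.exp (C * s) with hu
    have hud : ∀ s ∈ Set.Icc (0:ℝ) t₀,
        HasDerivAt u (y s * (p s + C) * Real.exp (C * s)) s := by
      intro s hs
      have he : HasDerivAt (fun s : ℝ => Real.exp (C * s)) (Real.exp (C * s) * C) s := by
        simpa using ((hasDerivAt_id s).const_mul C).exp
      have := (hy s hs.1).mul he
      exact this.congr_deriv (by ring)
    have hmono : MonotoneOn u (Set.Icc 0 t₀) := by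
      apply monotoneOn_of_hasDerivWithinAt_nonneg (convex_Icc 0 t₀)
        (fun s hs => (hud s hs).continuousAt.continuousWithinAt)
        (f' := fun s => y s * (p s + C) * Real.exp (C * s))
      · intro s hs
        rw [interior_Icc] at hs
        exact (hud s ⟨hs.1.le, hs.2.le⟩).hasDerivWithinAt
      · intro s hs
        rw [interior_Icc] at hs
        have h1 : 0 ≤ y s := hnn s ⟨hs.1.le, hs.2.le⟩
        have h2 : 0 ≤ p s + C := by
          have := (hC s ⟨hs.1.le, hs.2.le⟩)
          rw [Real.norm_eq_abs] at this
          linarith [(abs_le.1 this).1]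
        positivity
    have := hmono (Set.left_mem_Icc.2 ht₀0) (Set.right_mem_Icc.2 ht₀0) ht₀0
    rw [hu] at this
    simp only [mul_zero, Real.exp_zero, mul_one, hyt₀, zero_mul] at this
    linarith
  intro t ht
  rcases lt_trichotomy (y t) 0 with h | h | h
  · exfalso
    have hiv : Set.Icc (y t) (y 0) ⊆ y '' Set.Icc 0 t :=
      intermediate_value_Icc' ht (hcont.mono (fun r hr => hr.1))
    obtain ⟨r, hr, hyr⟩ := hiv ⟨h.le, hy0.le⟩
    exact hnozero r hr.1 hyr
  · exact absurd h (hnozero t ht)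
  · exact h

lemma pos_of_pos_at_zero {x d : ℝ → ℝ}
    (hx : ∀ t, 0 ≤ t → HasDerivAt x (d t) t)
    (hd0 : ∀ t, 0 ≤ t → x t = 0 → 0 < d t) (hx0 : 0 < x 0) :
    ∀ t, 0 ≤ t → 0 < x t := by
  have hcont : ContinuousOn x (Set.Ici 0) :=
    fun t ht => (hx t ht).continuousAt.continuousWithinAt
  have hnozero : ∀ t, 0 ≤ t → x t ≠ 0 := by
    by_contra hcon
    push_neg at hcon
    obtain ⟨t₁, ht₁, hxt₁⟩ := hcon
    set S : Set ℝ := Set.Ici 0 ∩ x ⁻¹' {0} with hS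
    have hSne : S.Nonempty := ⟨t₁, ht₁, hxt₁⟩
    have hSbdd : BddBelow S := ⟨0, fun s hs => hs.1⟩
    have hSclosed : IsClosed S :=
      hcont.preimage_isClosed_of_isClosed isClosed_Ici isClosed_singleton
    set t₀ := sInf S with ht₀def
    have ht₀S : t₀ ∈ S := hSclosed.csInf_mem hSne hSbdd
    have ht₀0 : 0 ≤ t₀ := ht₀S.1
    have hxt₀ : x t₀ = 0 := ht₀S.2
    have ht₀pos : 0 < t₀ := by
      rcases ht₀0.lt_or_eq with h | h
      · exact h
      · exfalso; rw [← h] at hxt₀; rw [hxt₀] at hx0; exact lt_irrefl 0 hx0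
    have hpos : ∀ s, 0 ≤ s → s < t₀ → 0 < x s := by
      intro s hs0 hst
      rcases lt_trichotomy (x s) 0 with h | h | h
      · exfalso
        have hiv : Set.Icc (x s) (x 0) ⊆ x '' Set.Icc 0 s :=
          intermediate_value_Icc' hs0 (hcont.mono (fun r hr => hr.1))
        obtain ⟨r, hr, hxr⟩ := hiv ⟨h.le, hx0.le⟩
        have : t₀ ≤ r := csInf_le hSbdd ⟨hr.1, hxr⟩
        linarith [hr.2]
      · exfalso
        have : t₀ ≤ s := csInf_le hSbdd ⟨hs0, h⟩
        linarith
      · exact h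
    have hder : HasDerivWithinAt x (d t₀) (Set.Iio t₀) t₀ := (hx t₀ ht₀0).hasDerivWithinAt
    rw [hasDerivWithinAt_iff_tendsto_slope] at hder
    have hdiff : Set.Iio t₀ \ {t₀} = Set.Iio t₀ := by
      apply Set.diff_singleton_eq_self
      simp
    rw [hdiff] at hder
    have hev : ∀ᶠ t in nhdsWithin t₀ (Set.Iio t₀), slope x t₀ t ≤ 0 := by
      filter_upwards [self_mem_nhdsWithin,
        eventually_nhdsWithin_of_eventually_nhds (eventually_gt_nhds ht₀pos)] with t ht1 ht2
      simp only [Set.mem_Iio] at ht1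
      have hxt : 0 < x t := hpos t ht2.le ht1
      rw [slope_def_field]
      exact div_nonpos_iff.mpr (Or.inl ⟨by rw [hxt₀]; linarith, by linarith⟩)
    have : d t₀ ≤ 0 := le_of_tendsto hder hev
    linarith [hd0 t₀ ht₀0 hxt₀]
  intro t ht
  rcases lt_trichotomy (x t) 0 with h | h | h
  · exfalso
    have hiv : Set.Icc (x t) (x 0) ⊆ x '' Set.Icc 0 t :=
      intermediate_value_Icc' ht (hcont.mono (fun r hr => hr.1))
    obtain ⟨r, hr, hxr⟩ := hiv ⟨h.le, hx0.le⟩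
    exact hnozero r hr.1 hxr
  · exact absurd h (hnozero t ht)
  · exact h

theorem damped_pp_global_attraction
    (α β γ δ σ a : ℝ)
    (hα : 0 < α) (hβ : 0 < β) (hγ : 0 < γ) (hδ : 0 < δ) (hσ : 0 < σ)
    (hR : γ * δ > α * σ) (hadef : a = γ * δ / σ - α)
    (x y : ℝ → ℝ)
    (hx : ∀ t, 0 ≤ t → HasDerivAt x (δ - α * x t - β * x t * y t) t)
    (hy : ∀ t, 0 ≤ t → HasDerivAt y (γ * x t * y t - σ * y t) t)
    (hx0 : 0 < x 0) (hy0 : 0 < y 0) :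
    Tendsto (fun t => (x t, y t)) atTop (nhds (σ / γ, a / β)) := by
  have ha : 0 < a := by
    rw [hadef, sub_pos, lt_div_iff₀ hσ]
    linarith [hR]
  have hxcont : ContinuousOn x (Set.Ici 0) :=
    fun t ht => (hx t ht).continuousAt.continuousWithinAt
  -- positivity
  have hypos : ∀ t, 0 ≤ t → 0 < y t := by
    apply pos_of_linear_ode (p := fun t => γ * x t - σ)
    · intro t ht
      have := hy t ht
      convert this using 1
      ring
    · exact ((continuousOn_const.mul hxcont).sub continuousOn_const)
    · exact hy0
  have hxpos : ∀ t, 0 ≤ t → 0 < x t := by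
    apply pos_of_pos_at_zero (d := fun t => δ - α * x t - β * x t * y t) hx
    · intro t ht hxt
      rw [hxt]
      simpa using hδ
    · exact hx0
  obtain ⟨xs, hxsdef⟩ : ∃ z : ℝ, z = σ / γ := ⟨_, rfl⟩
  obtain ⟨ys, hysdef⟩ : ∃ z : ℝ, z = a / β := ⟨_, rfl⟩
  have hxs0 : 0 < xs := hxsdef ▸ div_pos hσ hγ
  have hys0 : 0 < ys := hysdef ▸ div_pos ha hβ
  obtain ⟨c0, hc0def⟩ : ∃ z : ℝ, z = γ^2 * δ / σ := ⟨_, rfl⟩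
  have hc00 : 0 < c0 := by rw [hc0def]; positivity
  obtain ⟨V, hVdef⟩ : ∃ f : ℝ → ℝ, f = fun t =>
      γ * (x t - xs * Real.log (x t)) + β * (y t - ys * Real.log (y t)) := ⟨_, rfl⟩
  obtain ⟨v, hvdef⟩ : ∃ f : ℝ → ℝ, f = fun t => -c0 * (x t - xs)^2 / x t := ⟨_, rfl⟩
  have hVexp : ∀ t, V t = γ * (x t - xs * Real.log (x t)) + β * (y t - ys * Real.log (y t)) := by
    intro t; rw [hVdef]
  have hvexp : ∀ t, v t = -c0 * (x t - xs)^2 / x t := by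
    intro t; rw [hvdef]
  have hVd : ∀ t, 0 ≤ t → HasDerivAt V (v t) t := by
    intro t ht
    have hxt := hxpos t ht
    have hyt := hypos t ht
    have h1 : HasDerivAt (fun s => x s - xs * Real.log (x s))
        ((δ - α * x t - β * x t * y t) - xs * ((δ - α * x t - β * x t * y t) / x t)) t :=
      (hx t ht).sub (((hx t ht).log (ne_of_gt hxt)).const_mul xs)
    have h2 : HasDerivAt (fun s => y s - ys * Real.log (y s))
        ((γ * x t * y t - σ * y t) - ys * ((γ * x t * y t - σ * y t) / y t)) t :=
      (hy t ht).sub (((hy t ht).log (ne_of_gt hyt)).const_mul ys)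
    have h3 := (h1.const_mul γ).add (h2.const_mul β)
    rw [hVdef]
    refine h3.congr_deriv ?_
    symm
    rw [hvexp, hc0def, hxsdef, hysdef, hadef]
    field_simp
    ring
  have hvle : ∀ t, 0 ≤ t → v t ≤ 0 := by
    intro t ht
    rw [hvexp]
    have := hxpos t ht
    have h1 : -c0 * (x t - xs)^2 ≤ 0 := by nlinarith [sq_nonneg (x t - xs)]
    exact div_nonpos_iff.mpr (Or.inr ⟨h1, this.le⟩)
  have hVanti : AntitoneOn V (Set.Ici 0) := by
    apply antitoneOn_of_hasDerivWithinAt_nonpos (convex_Ici 0)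
      (fun t ht => (hVd t ht).continuousAt.continuousWithinAt) (f' := v)
    · intro t ht
      rw [interior_Ici] at ht
      exact (hVd t ht.le).hasDerivWithinAt
    · intro t ht
      rw [interior_Ici] at ht
      exact hvle t ht.le
  -- bounds on x and y
  obtain ⟨C1, hC1def⟩ : ∃ z : ℝ, z = (V 0 - β * (ys - ys * Real.log ys)) / γ := ⟨_, rfl⟩
  obtain ⟨C2, hC2def⟩ : ∃ z : ℝ, z = (V 0 - γ * (xs - xs * Real.log xs)) / β := ⟨_, rfl⟩
  have hxφ : ∀ t, 0 ≤ t → x t - xs * Real.log (x t) ≤ C1 := by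
    intro t ht
    have hVt : V t ≤ V 0 := hVanti (Set.self_mem_Ici) ht ht
    have hexp := hVexp t
    have hylb : β * (ys - ys * Real.log ys) ≤ β * (y t - ys * Real.log (y t)) :=
      mul_le_mul_of_nonneg_left (aux_log_lb hys0 (hypos t ht)) hβ.le
    rw [hC1def, le_div_iff₀ hγ]
    linarith
  have hyφ : ∀ t, 0 ≤ t → y t - ys * Real.log (y t) ≤ C2 := by
    intro t ht
    have hVt : V t ≤ V 0 := hVanti (Set.self_mem_Ici) ht ht
    have hexp := hVexp t
    have hxlb : γ * (xs - xs * Real.log xs) ≤ γ * (x t - xs * Real.log (x t)) :=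
      mul_le_mul_of_nonneg_left (aux_log_lb hxs0 (hxpos t ht)) hγ.le
    rw [hC2def, le_div_iff₀ hβ]
    linarith
  obtain ⟨xlo, hxlodef⟩ : ∃ z : ℝ, z = Real.exp (-(C1/xs)) := ⟨_, rfl⟩
  obtain ⟨xhi, hxhidef⟩ : ∃ z : ℝ, z = (xs + Real.sqrt (C1 + xs^2))^2 := ⟨_, rfl⟩
  obtain ⟨ylo, hylodef⟩ : ∃ z : ℝ, z = Real.exp (-(C2/ys)) := ⟨_, rfl⟩
  obtain ⟨yhi, hyhidef⟩ : ∃ z : ℝ, z = (ys + Real.sqrt (C2 + ys^2))^2 := ⟨_, rfl⟩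
  have hxb : ∀ t, 0 ≤ t → xlo ≤ x t ∧ x t ≤ xhi := by
    intro t ht
    rw [hxlodef, hxhidef]
    exact aux_phi_bounds hxs0 (hxpos t ht) (hxφ t ht)
  have hyb : ∀ t, 0 ≤ t → ylo ≤ y t ∧ y t ≤ yhi := by
    intro t ht
    rw [hylodef, hyhidef]
    exact aux_phi_bounds hys0 (hypos t ht) (hyφ t ht)
  have hxhi0 : 0 < xhi := lt_of_lt_of_le (hxpos 0 le_rfl) (hxb 0 le_rfl).2
  have hyhi0 : 0 < yhi := lt_of_lt_of_le (hypos 0 le_rfl) (hyb 0 le_rfl).2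
  -- Lipschitz bound for x
  obtain ⟨K, hKdef⟩ : ∃ z : ℝ, z = δ + α * xhi + β * xhi * yhi := ⟨_, rfl⟩
  have hK0 : 0 < K := by rw [hKdef]; positivity
  have hKb : ∀ u, 0 ≤ u → ‖δ - α * x u - β * x u * y u‖ ≤ K := by
    intro u hu
    have h1 := hxb u hu
    have h2 := hyb u hu
    have h3 := hxpos u hu
    have h4 := hypos u hu
    have h5 : x u * y u ≤ xhi * yhi := mul_le_mul h1.2 h2.2 h4.le hxhi0.le
    have h6 : α * x u ≤ α * xhi := mul_le_mul_of_nonneg_left h1.2 hα.le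
    have h7 : β * (x u * y u) ≤ β * (xhi * yhi) := mul_le_mul_of_nonneg_left h5 hβ.le
    have h8 : β * x u * y u = β * (x u * y u) := by ring
    have h9 : β * xhi * yhi = β * (xhi * yhi) := by ring
    have h10 : 0 < α * x u := mul_pos hα h3
    have h11 : 0 < β * x u * y u := by positivity
    rw [Real.norm_eq_abs, abs_le, hKdef]
    constructor
    · linarith
    · linarith
  have hxlip : ∀ s ∈ Set.Ici (0:ℝ), ∀ t ∈ Set.Ici (0:ℝ), |x s - x t| ≤ K * |s - t| := by
    intro s hs t ht
    have := Convex.norm_image_sub_le_of_norm_hasDerivWithin_le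
      (f := x) (f' := fun u => δ - α * x u - β * x u * y u) (s := Set.Ici 0) (C := K)
      (fun u hu => (hx u hu).hasDerivWithinAt)
      (fun u hu => hKb u hu)
      (convex_Ici 0) ht hs
    simpa [Real.norm_eq_abs] using this
  -- infimum of V
  obtain ⟨L, hLdef⟩ : ∃ z : ℝ, z = sInf (V '' Set.Ici 0) := ⟨_, rfl⟩
  have hVlb : ∀ t, 0 ≤ t →
      γ * (xs - xs * Real.log xs) + β * (ys - ys * Real.log ys) ≤ V t := by
    intro t ht
    rw [hVexp]
    have h1 : γ * (xs - xs * Real.log xs) ≤ γ * (x t - xs * Real.log (x t)) :=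
      mul_le_mul_of_nonneg_left (aux_log_lb hxs0 (hxpos t ht)) hγ.le
    have h2 : β * (ys - ys * Real.log ys) ≤ β * (y t - ys * Real.log (y t)) :=
      mul_le_mul_of_nonneg_left (aux_log_lb hys0 (hypos t ht)) hβ.le
    linarith
  have hbdd : BddBelow (V '' Set.Ici 0) := by
    refine ⟨γ * (xs - xs * Real.log xs) + β * (ys - ys * Real.log ys), ?_⟩
    rintro z ⟨t, ht, rfl⟩
    exact hVlb t ht
  have hLle : ∀ t, 0 ≤ t → L ≤ V t := by
    intro t ht
    rw [hLdef]
    exact csInf_le hbdd ⟨t, ht, rfl⟩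
  have happrox : ∀ η, 0 < η → ∃ T, 0 ≤ T ∧ V T < L + η := by
    intro η hη
    have hne : (V '' Set.Ici 0).Nonempty := ⟨V 0, 0, Set.self_mem_Ici, rfl⟩
    have hlt : sInf (V '' Set.Ici 0) < L + η := by rw [← hLdef]; linarith
    obtain ⟨z, ⟨T, hT, rfl⟩, hz⟩ := exists_lt_of_csInf_lt hne hlt
    exact ⟨T, hT, hz⟩
  -- x tends to xs
  have hxlim : Tendsto x atTop (nhds xs) := by
    rw [Metric.tendsto_atTop]
    intro ε hε
    by_contra hcon
    push_neg at hcon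
    obtain ⟨d, hddef⟩ : ∃ z : ℝ, z = ε / (2*K) := ⟨_, rfl⟩
    have hd0 : 0 < d := by rw [hddef]; positivity
    obtain ⟨ρ, hρdef⟩ : ∃ z : ℝ, z = c0 * ε^2 / (4*xhi) := ⟨_, rfl⟩
    have hρ0 : 0 < ρ := by rw [hρdef]; positivity
    obtain ⟨T, hT0, hTV⟩ := happrox (ρ*d) (by positivity)
    obtain ⟨t, htT, hdist⟩ := hcon T
    have ht0 : 0 ≤ t := le_trans hT0 htT
    rw [Real.dist_eq] at hdist
    have hstep : ∀ s ∈ Set.Icc t (t+d), ε/2 ≤ |x s - xs| := by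
      intro s hs
      have hs0 : 0 ≤ s := le_trans ht0 hs.1
      have hl := hxlip s hs0 t ht0
      have h1 : |s - t| ≤ d := by
        rw [abs_le]
        constructor
        · linarith [hs.1]
        · linarith [hs.2]
      have h2 : K * |s - t| ≤ K * d := mul_le_mul_of_nonneg_left h1 hK0.le
      have h3 : K * d = ε/2 := by
        rw [hddef]
        field_simp
      have h4 : |x t - xs| ≤ |x t - x s| + |x s - xs| := abs_sub_le (x t) (x s) xs
      have h5 : |x t - x s| = |x s - x t| := abs_sub_comm _ _
      linarith
    have hA : AntitoneOn (fun s => V s + ρ * s) (Set.Icc t (t+d)) := by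
      have hder : ∀ s ∈ Set.Icc t (t+d), HasDerivAt (fun s => V s + ρ * s) (v s + ρ) s := by
        intro s hs
        have hs0 : 0 ≤ s := le_trans ht0 hs.1
        have hid : HasDerivAt (fun s : ℝ => ρ * s) ρ s := by
          simpa using (hasDerivAt_id s).const_mul ρ
        exact (hVd s hs0).add hid
      apply antitoneOn_of_hasDerivWithinAt_nonpos (convex_Icc t (t+d))
        (fun s hs => (hder s hs).continuousAt.continuousWithinAt) (f' := fun s => v s + ρ)
      · intro s hs
        rw [interior_Icc] at hs
        exact (hder s ⟨hs.1.le, hs.2.le⟩).hasDerivWithinAt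
      · intro s hs
        rw [interior_Icc] at hs
        have hs0 : 0 ≤ s := le_trans ht0 hs.1.le
        have h1 := hstep s ⟨hs.1.le, hs.2.le⟩
        have hsq : ε^2/4 ≤ (x s - xs)^2 := by
          have h2 := pow_le_pow_left₀ (by positivity : (0:ℝ) ≤ ε/2) h1 2
          rw [sq_abs] at h2
          have h3 : (ε/2)^2 = ε^2/4 := by ring
          linarith only [h2, h3]
        have hxs_pos := hxpos s hs0
        have hxhis := (hxb s hs0).2
        have hkey : ρ ≤ c0 * (x s - xs)^2 / x s := by
          rw [hρdef, div_le_div_iff₀ (by positivity) hxs_pos]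
          have e1 : ε^2 * x s ≤ ε^2 * xhi :=
            mul_le_mul_of_nonneg_left hxhis (by positivity)
          have e2 : ε^2 * xhi ≤ 4*(x s - xs)^2 * xhi :=
            mul_le_mul_of_nonneg_right (by linarith) hxhi0.le
          have e3 := mul_le_mul_of_nonneg_left (e1.trans e2) hc00.le
          have e4 : c0 * ε^2 * x s = c0 * (ε^2 * x s) := by ring
          have e5 : c0 * (x s - xs)^2 * (4*xhi) = c0 * (4*(x s - xs)^2 * xhi) := by ring
          linarith only [e3, e4, e5]
        have hveq : v s = -(c0 * (x s - xs)^2 / x s) := by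
          rw [hvexp]; ring
        rw [hveq]
        linarith
    have hVt_le : V t ≤ V T := hVanti hT0 ht0 htT
    have hend := hA (Set.left_mem_Icc.2 (by linarith)) (Set.right_mem_Icc.2 (by linarith))
      (by linarith)
    have hL2 := hLle (t+d) (by linarith)
    simp only at hend
    have heq : ρ * (t+d) = ρ*t + ρ*d := by ring
    linarith only [hend, hVt_le, hTV, hL2, heq]
  -- y tends to ys via the linear combination W = x + (β/γ) y
  have hβ' : β ≠ 0 := hβ.ne'
  have hγ' : γ ≠ 0 := hγ.ne'
  have hσ' : σ ≠ 0 := hσ.ne'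
  obtain ⟨Fv, hFdef⟩ : ∃ z : ℝ, z = δ + (σ - α) * xs := ⟨_, rfl⟩
  obtain ⟨g, hgdef⟩ : ∃ f : ℝ → ℝ, f = fun t => x t + (β/γ) * y t - Fv/σ := ⟨_, rfl⟩
  have hgexp : ∀ t, g t = x t + (β/γ) * y t - Fv/σ := by intro t; rw [hgdef]
  have hgd : ∀ t, 0 ≤ t → HasDerivAt g (-σ * g t + (σ - α)*(x t - xs)) t := by
    intro t ht
    have h1 := (hx t ht).add ((hy t ht).const_mul (β/γ))
    have h2 := h1.sub_const (Fv/σ)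
    rw [hgdef]
    refine h2.congr_deriv ?_
    symm
    simp only [hFdef, hxsdef]
    field_simp
    ring
  have hglim : Tendsto g atTop (nhds 0) := by
    rw [Metric.tendsto_atTop]
    intro ε hε
    obtain ⟨ε', hε'def⟩ : ∃ z : ℝ, z = ε/3 := ⟨_, rfl⟩
    have hε'0 : 0 < ε' := by rw [hε'def]; positivity
    obtain ⟨m, hmdef⟩ : ∃ z : ℝ, z = σ * ε' / (|σ - α| + 1) := ⟨_, rfl⟩
    have hm0 : 0 < m := by
      rw [hmdef]
      have : 0 < |σ - α| + 1 := by positivity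
      positivity
    obtain ⟨T₁, hT₁⟩ := Metric.tendsto_atTop.1 hxlim m hm0
    obtain ⟨T, hTdef⟩ : ∃ z : ℝ, z = max T₁ 0 := ⟨_, rfl⟩
    have hT0 : 0 ≤ T := hTdef ▸ le_max_right _ _
    have hTT₁ : T₁ ≤ T := hTdef ▸ le_max_left _ _
    have he : ∀ s, T ≤ s → |(σ - α) * (x s - xs)| ≤ σ * ε' := by
      intro s hsT
      have h1 := hT₁ s (le_trans hTT₁ hsT)
      rw [Real.dist_eq] at h1
      rw [abs_mul]
      have h2 : |σ - α| * |x s - xs| ≤ |σ - α| * m :=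
        mul_le_mul_of_nonneg_left h1.le (abs_nonneg _)
      have h3 : |σ - α| * m ≤ (|σ - α| + 1) * m := by
        have he1 : (|σ - α| + 1) * m = |σ - α| * m + m := by ring
        linarith only [hm0, he1]
      have h4 : (|σ - α| + 1) * m = σ * ε' := by
        have hne : |σ - α| + 1 ≠ 0 := by positivity
        rw [hmdef, mul_div_cancel₀ _ hne]
      linarith only [h2, h3, h4]
    obtain ⟨B, hBdef⟩ : ∃ z : ℝ, z = |g T| := ⟨_, rfl⟩
    have hB0 : 0 ≤ B := hBdef ▸ abs_nonneg _
    have hBub : g T ≤ B := hBdef ▸ le_abs_self _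
    have hBlb : -B ≤ g T := hBdef ▸ neg_abs_le _
    -- upper estimate
    have hup : ∀ s, T ≤ s → (g s - ε') * Real.exp (σ*(s-T)) ≤ g T - ε' := by
      have hder : ∀ s, T ≤ s → HasDerivAt (fun s => (g s - ε') * Real.exp (σ*(s-T)))
          (((-σ * g s + (σ-α)*(x s - xs)) + σ * (g s - ε')) * Real.exp (σ*(s-T))) s := by
        intro s hsT
        have hs0 : 0 ≤ s := le_trans hT0 hsT
        have hexp : HasDerivAt (fun s : ℝ => Real.exp (σ*(s-T))) (Real.exp (σ*(s-T)) * σ) s := by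
          simpa using (((hasDerivAt_id s).sub_const T).const_mul σ).exp
        have h1 := ((hgd s hs0).sub_const ε').mul hexp
        exact h1.congr_deriv (by ring)
      have hanti : AntitoneOn (fun s => (g s - ε') * Real.exp (σ*(s-T))) (Set.Ici T) := by
        apply antitoneOn_of_hasDerivWithinAt_nonpos (convex_Ici T)
          (fun s hs => (hder s hs).continuousAt.continuousWithinAt)
          (f' := fun s => ((-σ * g s + (σ-α)*(x s - xs)) + σ * (g s - ε')) * Real.exp (σ*(s-T)))
        · intro s hs
          rw [interior_Ici] at hs
          exact (hder s hs.le).hasDerivWithinAt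
        · intro s hs
          rw [interior_Ici] at hs
          have h1 := he s hs.le
          have h2 : (σ-α)*(x s - xs) ≤ σ*ε' := le_trans (le_abs_self _) h1
          have h3 : (0:ℝ) ≤ Real.exp (σ*(s-T)) := (Real.exp_pos _).le
          apply mul_nonpos_of_nonpos_of_nonneg _ h3
          have h4 : (-σ * g s + (σ-α)*(x s - xs)) + σ * (g s - ε')
              = (σ-α)*(x s - xs) - σ*ε' := by ring
          rw [h4]
          linarith only [h2]
      intro s hsT
      have h1 := hanti Set.self_mem_Ici hsT hsT
      simpa using h1
    -- lower estimate
    have hlo : ∀ s, T ≤ s → g T + ε' ≤ (g s + ε') * Real.exp (σ*(s-T)) := by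
      have hder : ∀ s, T ≤ s → HasDerivAt (fun s => (g s + ε') * Real.exp (σ*(s-T)))
          (((-σ * g s + (σ-α)*(x s - xs)) + σ * (g s + ε')) * Real.exp (σ*(s-T))) s := by
        intro s hsT
        have hs0 : 0 ≤ s := le_trans hT0 hsT
        have hexp : HasDerivAt (fun s : ℝ => Real.exp (σ*(s-T))) (Real.exp (σ*(s-T)) * σ) s := by
          simpa using (((hasDerivAt_id s).sub_const T).const_mul σ).exp
        have h1 := ((hgd s hs0).add_const ε').mul hexp
        exact h1.congr_deriv (by ring)
      have hmono : MonotoneOn (fun s => (g s + ε') * Real.exp (σ*(s-T))) (Set.Ici T) := by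
        apply monotoneOn_of_hasDerivWithinAt_nonneg (convex_Ici T)
          (fun s hs => (hder s hs).continuousAt.continuousWithinAt)
          (f' := fun s => ((-σ * g s + (σ-α)*(x s - xs)) + σ * (g s + ε')) * Real.exp (σ*(s-T)))
        · intro s hs
          rw [interior_Ici] at hs
          exact (hder s hs.le).hasDerivWithinAt
        · intro s hs
          rw [interior_Ici] at hs
          have h1 := he s hs.le
          have h2 : -(σ*ε') ≤ (σ-α)*(x s - xs) := neg_le_of_abs_le h1
          have h3 : (0:ℝ) ≤ Real.exp (σ*(s-T)) := (Real.exp_pos _).le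
          apply mul_nonneg _ h3
          have h4 : (-σ * g s + (σ-α)*(x s - xs)) + σ * (g s + ε')
              = (σ-α)*(x s - xs) + σ*ε' := by ring
          rw [h4]
          linarith only [h2]
      intro s hsT
      have h1 := hmono Set.self_mem_Ici hsT hsT
      simpa using h1
    obtain ⟨N, hNdef⟩ : ∃ z : ℝ, z = T + B/(σ*ε') := ⟨_, rfl⟩
    have hNT : T ≤ N := by
      rw [hNdef]
      have : 0 ≤ B/(σ*ε') := div_nonneg hB0 (by positivity)
      linarith only [this]
    refine ⟨N, ?_⟩
    intro n hn
    have hnT : T ≤ n := le_trans hNT hn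
    have hE1 : B ≤ ε' * Real.exp (σ*(n-T)) := by
      have h1 : σ*(n-T) + 1 ≤ Real.exp (σ*(n-T)) := Real.add_one_le_exp _
      have h2 : B/(σ*ε') ≤ n - T := by
        rw [hNdef] at hn
        linarith only [hn]
      have h3 : B ≤ (n-T)*(σ*ε') := (div_le_iff₀ (by positivity)).1 h2
      have h4 := mul_le_mul_of_nonneg_left h1 hε'0.le
      have h5 : ε' * (σ*(n-T) + 1) = (n-T)*(σ*ε') + ε' := by ring
      linarith only [h3, h4, h5, hε'0]
    have hupn := hup n hnT
    have hlon := hlo n hnT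
    have hepos : (0:ℝ) < Real.exp (σ*(n-T)) := Real.exp_pos _
    have hub : g n ≤ 2*ε' := by
      by_contra hc
      push_neg at hc
      have h1 : ε' < g n - ε' := by linarith only [hc]
      have h2 : ε' * Real.exp (σ*(n-T)) < (g n - ε') * Real.exp (σ*(n-T)) :=
        mul_lt_mul_of_pos_right h1 hepos
      linarith only [hupn, hBub, h2, hE1, hε'0]
    have hlb : -(2*ε') ≤ g n := by
      by_contra hc
      push_neg at hc
      have h1 : g n + ε' < -ε' := by linarith only [hc]
      have h2 : (g n + ε') * Real.exp (σ*(n-T)) < -ε' * Real.exp (σ*(n-T)) :=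
        mul_lt_mul_of_pos_right h1 hepos
      have h3 : -ε' * Real.exp (σ*(n-T)) ≤ -B := by linarith only [hE1]
      linarith only [hlon, hBlb, h2, h3, hε'0]
    rw [Real.dist_eq, sub_zero, abs_lt]
    rw [hε'def] at hub hlb
    constructor
    · linarith only [hlb, hε]
    · linarith only [hub, hε]
  have hylim : Tendsto y atTop (nhds ys) := by
    have hyeq : ∀ t, y t = (γ/β) * (g t + Fv/σ - x t) := by
      intro t
      rw [hgexp t]
      field_simp
      ring
    have h1 : Tendsto (fun t => (γ/β) * (g t + Fv/σ - x t)) atTop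
        (nhds ((γ/β) * ((0 + Fv/σ) - xs))) :=
      ((hglim.add_const (Fv/σ)).sub hxlim).const_mul (γ/β)
    have h2 : (γ/β) * ((0 + Fv/σ) - xs) = ys := by
      rw [hFdef, hxsdef, hysdef, hadef]
      field_simp
      ring
    rw [h2] at h1
    exact Tendsto.congr (fun t => (hyeq t).symm) h1
  have hfinal := hxlim.prodMk_nhds hylim
  rw [hxsdef, hysdef] at hfinal
  exact hfinal
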